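/- Let λ0, λ2, M be positive reals and b ∈ ℝ, and set c(λ0, λ2, M) = 2√(λ0·λ2) if √(λ0/λ2) ≤ M and c(λ0, λ2, M) = λ0/M + λ2·M if √(λ0/λ2) > M. Then 0 is a minimizer of the function β ↦ (1/2)(β − b)² + ψ(β; λ0, λ2, M) over the set {β ∈ ℝ : |β| ≤ M} if and only if |b| ≤ c(λ0, λ2, M). -/

import Mathlib

/-- The reverse Huber function: `B(t) = |t|` for `|t| ≤ 1` and `B(t) = (t² + 1)/2` otherwise. -/
noncomputable def revHuber (t : ℝ) : ℝ := if |t| ≤ 1 then |t| else (t ^ 2 + 1) / 2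

/-- The penalty `ψ(β; λ0, λ2, M)`. -/
noncomputable def psi (l0 l2 M b : ℝ) : ℝ :=
  if Real.sqrt (l0 / l2) ≤ M then 2 * l0 * revHuber (b * Real.sqrt (l2 / l0))
  else (l0 / M + l2 * M) * |b|

/-- The threshold `c(λ0, λ2, M)`. -/
noncomputable def cThresh (l0 l2 M : ℝ) : ℝ :=
  if Real.sqrt (l0 / l2) ≤ M then 2 * Real.sqrt (l0 * l2) else l0 / M + l2 * M

lemma aux_le (c δ b : ℝ) (hδ : 0 < δ)
    (h : ∀ ε : ℝ, 0 < ε → ε ≤ δ → |b| ≤ c + ε / 2) : |b| ≤ c := by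
  by_contra hcon
  push_neg at hcon
  have hpos : 0 < |b| - c := by linarith
  have h1 := h (min δ (|b| - c)) (lt_min hδ hpos) (min_le_left _ _)
  have h2 : min δ (|b| - c) ≤ |b| - c := min_le_right _ _
  linarith

set_option maxHeartbeats 2000000 in
theorem zero_is_minimizer_iff
    (l0 l2 M b : ℝ) (hl0 : 0 < l0) (hl2 : 0 < l2) (hM : 0 < M) :
    (∀ β : ℝ, |β| ≤ M →
        (1 / 2) * ((0 : ℝ) - b) ^ 2 + psi l0 l2 M 0 ≤
          (1 / 2) * (β - b) ^ 2 + psi l0 l2 M β) ↔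
      |b| ≤ cThresh l0 l2 M := by
  have hr : 0 < Real.sqrt (l2 / l0) := Real.sqrt_pos.mpr (by positivity)
  have hs : 0 < Real.sqrt (l0 / l2) := Real.sqrt_pos.mpr (by positivity)
  have hsr : Real.sqrt (l0 / l2) * Real.sqrt (l2 / l0) = 1 := by
    rw [← Real.sqrt_mul (by positivity)]
    rw [show l0 / l2 * (l2 / l0) = 1 by field_simp]
    exact Real.sqrt_one
  have hc : 2 * l0 * Real.sqrt (l2 / l0) = 2 * Real.sqrt (l0 * l2) := by
    have h1 : l0 * Real.sqrt (l2 / l0) = Real.sqrt (l0 * l2) := by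
      rw [show l0 * l2 = l0 ^ 2 * (l2 / l0) by field_simp,
        Real.sqrt_mul (by positivity), Real.sqrt_sq hl0.le]
    linarith
  have hr2 : Real.sqrt (l2 / l0) ^ 2 = l2 / l0 := Real.sq_sqrt (by positivity)
  have hpsi0 : psi l0 l2 M 0 = 0 := by simp [psi, revHuber]
  constructor
  · intro h
    by_cases hcase : Real.sqrt (l0 / l2) ≤ M
    · rw [cThresh, if_pos hcase]
      apply aux_le _ (min M (Real.sqrt (l0 / l2))) _ (lt_min hM hs)
      intro ε hε hεδ
      have hεM : ε ≤ M := le_trans hεδ (min_le_left _ _)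
      have hεs : ε ≤ Real.sqrt (l0 / l2) := le_trans hεδ (min_le_right _ _)
      have hεr : ε * Real.sqrt (l2 / l0) ≤ 1 := by
        calc ε * Real.sqrt (l2 / l0) ≤ Real.sqrt (l0 / l2) * Real.sqrt (l2 / l0) :=
              mul_le_mul_of_nonneg_right hεs hr.le
          _ = 1 := hsr
      rcases le_or_gt 0 b with hb0 | hb0
      · have hβM : |ε| ≤ M := by rw [abs_of_pos hε]; exact hεM
        have h1 := h ε hβM
        rw [hpsi0, psi, if_pos hcase, revHuber, if_pos (by
          rwa [abs_mul, abs_of_pos hε, abs_of_pos hr])] at h1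
        rw [abs_mul, abs_of_pos hε, abs_of_pos hr] at h1
        rw [abs_of_nonneg hb0]
        nlinarith [hc, hε]
      · have hβM : |(-ε)| ≤ M := by rw [abs_neg, abs_of_pos hε]; exact hεM
        have h1 := h (-ε) hβM
        rw [hpsi0, psi, if_pos hcase, revHuber, if_pos (by
          rw [abs_mul, abs_neg, abs_of_pos hε, abs_of_pos hr]; exact hεr)] at h1
        rw [abs_mul, abs_neg, abs_of_pos hε, abs_of_pos hr] at h1
        rw [abs_of_neg hb0]
        nlinarith [hc, hε]
    · rw [cThresh, if_neg hcase]
      apply aux_le _ M _ hM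
      intro ε hε hεM
      rcases le_or_gt 0 b with hb0 | hb0
      · have hβM : |ε| ≤ M := by rw [abs_of_pos hε]; exact hεM
        have h1 := h ε hβM
        rw [hpsi0, psi, if_neg hcase, abs_of_pos hε] at h1
        rw [abs_of_nonneg hb0]
        nlinarith [hε]
      · have hβM : |(-ε)| ≤ M := by rw [abs_neg, abs_of_pos hε]; exact hεM
        have h1 := h (-ε) hβM
        rw [hpsi0, psi, if_neg hcase, abs_neg, abs_of_pos hε] at h1
        rw [abs_of_neg hb0]
        nlinarith [hε]
  · intro hb β hβ
    rw [hpsi0]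
    have habβ : b * β ≤ |b| * |β| := (le_abs_self _).trans (abs_mul b β).le
    by_cases hcase : Real.sqrt (l0 / l2) ≤ M
    · rw [cThresh, if_pos hcase] at hb
      rw [psi, if_pos hcase, revHuber]
      by_cases ht : |β * Real.sqrt (l2 / l0)| ≤ 1
      · rw [if_pos ht, abs_mul, abs_of_pos hr]
        have h2 : |b| * |β| ≤ 2 * Real.sqrt (l0 * l2) * |β| :=
          mul_le_mul_of_nonneg_right hb (abs_nonneg β)
        nlinarith [sq_nonneg β, sq_abs β, hc, abs_nonneg β]
      · rw [if_neg ht]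
        have hsm : Real.sqrt (l0 * l2) = Real.sqrt l0 * Real.sqrt l2 :=
          Real.sqrt_mul hl0.le l2
        rw [show 2 * l0 * (((β * Real.sqrt (l2 / l0)) ^ 2 + 1) / 2)
            = l2 * β ^ 2 + l0 by rw [mul_pow, hr2]; field_simp]
        have h2 : |b| * |β| ≤ 2 * (Real.sqrt l0 * Real.sqrt l2) * |β| := by
          rw [← hsm]; exact mul_le_mul_of_nonneg_right hb (abs_nonneg β)
        nlinarith [habβ, h2, sq_nonneg (Real.sqrt l0 - Real.sqrt l2 * |β|),
          Real.sq_sqrt hl0.le, Real.sq_sqrt hl2.le, sq_abs β, sq_nonneg β]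
    · rw [cThresh, if_neg hcase] at hb
      rw [psi, if_neg hcase]
      have h2 : |b| * |β| ≤ (l0 / M + l2 * M) * |β| :=
        mul_le_mul_of_nonneg_right hb (abs_nonneg β)
      have h3 : (1/2) * (β - b)^2 = (1/2)*β^2 - b*β + (1/2)*((0:ℝ)-b)^2 := by ring
      linarith [habβ, h2, sq_nonneg β, h3]
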